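/- (Hardy's inequality in ℝ³) For every u in the Schwartz space (or in H¹(ℝ³)), ‖ |x|^{-1} u ‖_{L²(ℝ³)} ≤ 2 ‖∇u‖_{L²(ℝ³)}. -/

import Mathlib

open MeasureTheory Set Filter Topology

noncomputable section

namespace HardyAux

local notation "E" => EuclideanSpace ℝ (Fin 3)

lemma cont_fderiv (u : SchwartzMap E ℂ) : Continuous fun y : E => fderiv ℝ u y :=
  (u.smooth ⊤).continuous_fderiv (by simp)

lemma hasDerivAt_ray (u : SchwartzMap E ℂ) (x : E) (t : ℝ) :
    HasDerivAt (fun s : ℝ => u (s • x)) ((fderiv ℝ u (t • x)) x) t := by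
  have h1 : HasFDerivAt u (fderiv ℝ u (t • x)) (t • x) :=
    (u.differentiable.differentiableAt).hasFDerivAt
  have h2 : HasDerivAt (fun s : ℝ => s • x) x t := by
    simpa using (hasDerivAt_id t).smul_const x
  exact h1.comp_hasDerivAt t h2

lemma tendsto_norm_ray (u : SchwartzMap E ℂ) {x : E} (hx : x ≠ 0) :
    Tendsto (fun T : ℝ => ‖u (T • x)‖) atTop (nhds 0) := by
  obtain ⟨C, hC⟩ := u.decay 1 0
  have hxpos : (0:ℝ) < ‖x‖ := norm_pos_iff.2 hx
  apply squeeze_zero' (Eventually.of_forall fun T => norm_nonneg _)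
    (g := fun T : ℝ => C / (T * ‖x‖))
  · filter_upwards [eventually_gt_atTop (0:ℝ)] with T hT
    have h := hC.2 (T • x)
    simp only [pow_one, norm_iteratedFDeriv_zero] at h
    have hTx : ‖T • x‖ = T * ‖x‖ := by
      rw [norm_smul, Real.norm_eq_abs, abs_of_pos hT]
    rw [hTx] at h
    rw [le_div_iff₀ (by positivity)]
    linarith [h]
  · exact Tendsto.div_atTop tendsto_const_nhds
      (tendsto_id.atTop_mul_const hxpos)

lemma real_ray_bound (u : SchwartzMap E ℂ) {x : E} (hx : x ≠ 0)
    (hint : IntegrableOn (fun t : ℝ => ‖fderiv ℝ u (t • x)‖) (Ioi 1)) :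
    ‖u x‖ ≤ ‖x‖ * ∫ t in Ioi (1:ℝ), ‖fderiv ℝ u (t • x)‖ := by
  have hgc : Continuous fun t : ℝ => (fderiv ℝ u (t • x)) x := by
    exact (ContinuousLinearMap.apply ℝ ℂ x).continuous.comp
      ((cont_fderiv u).comp (continuous_id.smul continuous_const))
  have hgc' : Continuous fun t : ℝ => ‖fderiv ℝ u (t • x)‖ :=
    ((cont_fderiv u).comp (continuous_id.smul continuous_const)).norm
  have key : ∀ T : ℝ, 1 ≤ T →
      ‖u x‖ - ‖x‖ * ∫ t in Ioi (1:ℝ), ‖fderiv ℝ u (t • x)‖ ≤ ‖u (T • x)‖ := by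
    intro T hT
    have hftc : u (T • x) - u ((1:ℝ) • x)
        = ∫ t in (1:ℝ)..T, (fderiv ℝ u (t • x)) x :=
      (intervalIntegral.integral_eq_sub_of_hasDerivAt
        (fun t _ => hasDerivAt_ray u x t) (hgc.intervalIntegrable 1 T)).symm
    have h1 : ‖u x‖ ≤ ‖u (T • x)‖ + ‖∫ t in (1:ℝ)..T, (fderiv ℝ u (t • x)) x‖ := by
      have : u ((1:ℝ) • x) = u (T • x) - ∫ t in (1:ℝ)..T, (fderiv ℝ u (t • x)) x := by
        rw [← hftc]; ring
      calc ‖u x‖ = ‖u ((1:ℝ) • x)‖ := by rw [one_smul]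
        _ ≤ _ := by rw [this]; exact norm_sub_le _ _
    have h2 : ‖∫ t in (1:ℝ)..T, (fderiv ℝ u (t • x)) x‖
        ≤ ∫ t in (1:ℝ)..T, ‖fderiv ℝ u (t • x)‖ * ‖x‖ := by
      refine (intervalIntegral.norm_integral_le_integral_norm hT).trans ?_
      apply intervalIntegral.integral_mono_on hT
        (hgc.norm.intervalIntegrable 1 T) ((hgc'.mul continuous_const).intervalIntegrable 1 T)
      intro t _
      exact (fderiv ℝ u (t • x)).le_opNorm x
    have h3 : ∫ t in (1:ℝ)..T, ‖fderiv ℝ u (t • x)‖ * ‖x‖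
        ≤ (∫ t in Ioi (1:ℝ), ‖fderiv ℝ u (t • x)‖) * ‖x‖ := by
      rw [intervalIntegral.integral_of_le hT, ← integral_mul_const]
      apply setIntegral_mono_set (hint.mul_const ‖x‖)
      · exact Eventually.of_forall fun t => by positivity
      · exact Eventually.of_forall fun t ht => ht.1
    nlinarith [h1, h2, h3]
  have := ge_of_tendsto (tendsto_norm_ray u hx)
    ((eventually_ge_atTop (1:ℝ)).mono key)
  linarith

lemma pointwise_bound (u : SchwartzMap E ℂ) {x : E} (hx : x ≠ 0) :
    ENNReal.ofReal (‖x‖⁻¹ * ‖u x‖)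
      ≤ ∫⁻ t in Ioi (1:ℝ), (‖fderiv ℝ u (t • x)‖₊ : ENNReal) := by
  have hgc' : Continuous fun t : ℝ => ‖fderiv ℝ u (t • x)‖ :=
    ((cont_fderiv u).comp (continuous_id.smul continuous_const)).norm
  by_cases hfin : (∫⁻ t in Ioi (1:ℝ), (‖fderiv ℝ u (t • x)‖₊ : ENNReal)) = ⊤
  · rw [hfin]; exact le_top
  have hint : IntegrableOn (fun t : ℝ => ‖fderiv ℝ u (t • x)‖) (Ioi 1) := by
    refine ⟨hgc'.aestronglyMeasurable, ?_⟩
    rw [HasFiniteIntegral]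
    simpa [nnnorm_norm, enorm_eq_nnnorm] using lt_top_iff_ne_top.2 hfin
  have hreal := real_ray_bound u hx hint
  have hxpos : (0:ℝ) < ‖x‖ := norm_pos_iff.2 hx
  have h1 : ‖x‖⁻¹ * ‖u x‖ ≤ ∫ t in Ioi (1:ℝ), ‖fderiv ℝ u (t • x)‖ := by
    rw [inv_mul_le_iff₀ hxpos]
    linarith [hreal]
  calc ENNReal.ofReal (‖x‖⁻¹ * ‖u x‖)
      ≤ ENNReal.ofReal (∫ t in Ioi (1:ℝ), ‖fderiv ℝ u (t • x)‖) :=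
        ENNReal.ofReal_le_ofReal h1
    _ = ∫⁻ t in Ioi (1:ℝ), ENNReal.ofReal ‖fderiv ℝ u (t • x)‖ :=
        ofReal_integral_eq_lintegral_ofReal hint
          (Eventually.of_forall fun t => norm_nonneg _)
    _ = ∫⁻ t in Ioi (1:ℝ), (‖fderiv ℝ u (t • x)‖₊ : ENNReal) := by
        simp [ofReal_norm, enorm_eq_nnnorm]

lemma lintegral_rpow_Ioi_one {a : ℝ} (ha : a < -1) :
    ∫⁻ t in Ioi (1:ℝ), ENNReal.ofReal (t ^ a) = ENNReal.ofReal (-1 / (a + 1)) := by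
  rw [← ofReal_integral_eq_lintegral_ofReal (integrableOn_Ioi_rpow_of_lt ha zero_lt_one)]
  · rw [integral_Ioi_rpow_of_lt ha zero_lt_one, Real.one_rpow]
  · filter_upwards [ae_restrict_mem measurableSet_Ioi] with t ht
    exact Real.rpow_nonneg (le_of_lt (lt_trans zero_lt_one ht)) _

lemma sq_half_rpow (X Y : ENNReal) : (X ^ ((1:ℝ)/2) * Y ^ ((1:ℝ)/2)) ^ 2 = X * Y := by
  rw [mul_pow, ← ENNReal.rpow_two (X ^ _), ← ENNReal.rpow_two (Y ^ _),
    ← ENNReal.rpow_mul, ← ENNReal.rpow_mul]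
  norm_num

lemma holder_step (u : SchwartzMap E ℂ) {x : E} (hx : x ≠ 0) :
    (ENNReal.ofReal (‖x‖⁻¹ * ‖u x‖)) ^ 2 ≤ ENNReal.ofReal 2 *
      ∫⁻ t in Ioi (1:ℝ),
        ENNReal.ofReal (t ^ ((3:ℝ)/2)) * (‖fderiv ℝ u (t • x)‖₊ : ENNReal) ^ 2 := by
  set G : ℝ → ENNReal := fun t => (‖fderiv ℝ u (t • x)‖₊ : ENNReal) with hGdef
  have hGm : Measurable G :=
    (((cont_fderiv u).comp (continuous_id.smul continuous_const)).measurable).enorm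
  set a : ℝ → ENNReal := fun t => ENNReal.ofReal (t ^ (-(3:ℝ)/4)) with hadef
  set b : ℝ → ENNReal := fun t => ENNReal.ofReal (t ^ ((3:ℝ)/4)) * G t with hbdef
  have ham : Measurable a := (measurable_id.pow_const _).ennreal_ofReal
  have hbm : Measurable b := ((measurable_id.pow_const _).ennreal_ofReal).mul hGm
  have hcongr : ∫⁻ t in Ioi (1:ℝ), G t = ∫⁻ t in Ioi (1:ℝ), (a * b) t := by
    apply setLIntegral_congr_fun measurableSet_Ioi
    intro t ht
    have ht0 : (0:ℝ) < t := lt_trans zero_lt_one ht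
    simp only [hadef, hbdef, Pi.mul_apply, ← mul_assoc, ← ENNReal.ofReal_mul
      (Real.rpow_nonneg ht0.le _), ← Real.rpow_add ht0]
    norm_num
  have hholder := ENNReal.lintegral_mul_le_Lp_mul_Lq (volume.restrict (Ioi (1:ℝ)))
    Real.HolderConjugate.two_two
    ham.aemeasurable hbm.aemeasurable
  have hA : ∫⁻ t in Ioi (1:ℝ), a t ^ (2:ℝ) = ENNReal.ofReal 2 := by
    have : ∫⁻ t in Ioi (1:ℝ), a t ^ (2:ℝ)
        = ∫⁻ t in Ioi (1:ℝ), ENNReal.ofReal (t ^ (-(3:ℝ)/2)) := by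
      apply setLIntegral_congr_fun measurableSet_Ioi
      intro t ht
      have ht0 : (0:ℝ) < t := lt_trans zero_lt_one ht
      show a t ^ (2:ℝ) = ENNReal.ofReal (t ^ (-(3:ℝ)/2))
      rw [hadef, ENNReal.ofReal_rpow_of_nonneg (Real.rpow_nonneg ht0.le _) (by norm_num),
        ← Real.rpow_mul ht0.le]
      norm_num
    rw [this, lintegral_rpow_Ioi_one (by norm_num)]
    norm_num
  have hB : ∫⁻ t in Ioi (1:ℝ), b t ^ (2:ℝ)
      = ∫⁻ t in Ioi (1:ℝ), ENNReal.ofReal (t ^ ((3:ℝ)/2)) * G t ^ 2 := by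
    apply setLIntegral_congr_fun measurableSet_Ioi
    intro t ht
    have ht0 : (0:ℝ) < t := lt_trans zero_lt_one ht
    show b t ^ (2:ℝ) = ENNReal.ofReal (t ^ ((3:ℝ)/2)) * G t ^ 2
    rw [hbdef, ENNReal.mul_rpow_of_nonneg _ _ (by norm_num : (0:ℝ) ≤ 2),
      ENNReal.ofReal_rpow_of_nonneg (Real.rpow_nonneg ht0.le _) (by norm_num),
      ← Real.rpow_mul ht0.le, ENNReal.rpow_two]
    norm_num
  have h1 : ENNReal.ofReal (‖x‖⁻¹ * ‖u x‖) ≤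
      (ENNReal.ofReal 2) ^ ((1:ℝ)/2) *
        (∫⁻ t in Ioi (1:ℝ), ENNReal.ofReal (t ^ ((3:ℝ)/2)) * G t ^ 2) ^ ((1:ℝ)/2) := by
    calc ENNReal.ofReal (‖x‖⁻¹ * ‖u x‖) ≤ ∫⁻ t in Ioi (1:ℝ), G t := pointwise_bound u hx
      _ = ∫⁻ t in Ioi (1:ℝ), (a * b) t := hcongr
      _ ≤ _ := by rw [← hA, ← hB]; exact hholder
  calc (ENNReal.ofReal (‖x‖⁻¹ * ‖u x‖)) ^ 2
      ≤ ((ENNReal.ofReal 2) ^ ((1:ℝ)/2) *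
        (∫⁻ t in Ioi (1:ℝ), ENNReal.ofReal (t ^ ((3:ℝ)/2)) * G t ^ 2) ^ ((1:ℝ)/2)) ^ 2 :=
        pow_le_pow_left' h1 2
    _ = _ := sq_half_rpow _ _

lemma scaling (u : SchwartzMap E ℂ) {t : ℝ} (ht : (1:ℝ) < t) :
    ∫⁻ x : E, (‖fderiv ℝ u (t • x)‖₊ : ENNReal) ^ 2
      = ENNReal.ofReal (t ^ (-(3:ℝ))) * ∫⁻ y : E, (‖fderiv ℝ u y‖₊ : ENNReal) ^ 2 := by
  have ht0 : (0:ℝ) < t := lt_trans zero_lt_one ht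
  have hm : Measurable fun y : E => (‖fderiv ℝ u y‖₊ : ENNReal) ^ 2 :=
    ((cont_fderiv u).measurable.enorm).pow_const 2
  have hsmul : Measurable fun x : E => t • x := measurable_const_smul t
  have := lintegral_map hm hsmul (μ := (volume : Measure E))
  rw [Measure.map_addHaar_smul (volume : Measure E) (ne_of_gt ht0)] at this
  rw [← this, lintegral_smul_measure]
  congr 1
  rw [finrank_euclideanSpace, Fintype.card_fin]
  rw [abs_of_nonneg (by positivity), Real.rpow_neg ht0.le]
  congr 2
  rw [← Real.rpow_natCast t 3]
  norm_num

end HardyAux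

open HardyAux in
/-- Hardy's inequality in ℝ³ (squared form):
`‖ |x|⁻¹ u ‖_{L²}² ≤ 2² ‖∇u‖_{L²}²` for Schwartz functions `u`. -/
theorem stmt5 (u : SchwartzMap (EuclideanSpace ℝ (Fin 3)) ℂ) :
    ∫ x : EuclideanSpace ℝ (Fin 3), (‖x‖⁻¹ * ‖u x‖) ^ 2 ≤
      2 ^ 2 * ∫ x : EuclideanSpace ℝ (Fin 3), ‖fderiv ℝ u x‖ ^ 2 := by
  set E := EuclideanSpace ℝ (Fin 3)
  set K : ENNReal := ∫⁻ y : E, (‖fderiv ℝ u y‖₊ : ENNReal) ^ 2 with hKdef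
  have hvcont : Continuous fun y : E => fderiv ℝ u y := cont_fderiv u
  -- integrability of the squared gradient
  have hint2 : Integrable (fun y : E => ‖fderiv ℝ u y‖ ^ 2) := by
    set w := SchwartzMap.fderivCLM ℝ E ℂ u with hwdef
    obtain ⟨C, hC⟩ := w.decay 0 0
    have hCb : ∀ y : E, ‖fderiv ℝ u y‖ ≤ C := by
      intro y
      have := hC.2 y
      simpa [hwdef, norm_iteratedFDeriv_zero, SchwartzMap.fderivCLM_apply] using this
    refine Integrable.mono' ((w.integrable (μ := volume)).norm.const_mul C)
      ((hvcont.norm.pow 2).aestronglyMeasurable) ?_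
    apply Eventually.of_forall
    intro y
    have h1 : ‖fderiv ℝ u y‖ ^ 2 ≤ C * ‖fderiv ℝ u y‖ := by
      have := hCb y
      nlinarith [norm_nonneg (fderiv ℝ u y)]
    have h2 : ‖w y‖ = ‖fderiv ℝ u y‖ := by rw [SchwartzMap.fderivCLM_apply]
    rw [Real.norm_eq_abs, abs_of_nonneg (by positivity), h2]
    exact h1
  have hKfin : K ≠ ⊤ := by
    have h := hint2.2
    rw [HasFiniteIntegral] at h
    have heq : ∀ y : E, (‖(‖fderiv ℝ u y‖ ^ 2 : ℝ)‖₊ : ENNReal)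
        = (‖fderiv ℝ u y‖₊ : ENNReal) ^ 2 := by
      intro y
      rw [nnnorm_pow, nnnorm_norm]
      push_cast
      ring
    rw [hKdef]
    simp_rw [← heq]
    exact h.ne
  -- the main lintegral estimate
  have hswapm : AEMeasurable (Function.uncurry fun (x : E) (t : ℝ) =>
      ENNReal.ofReal (t ^ ((3:ℝ)/2)) * (‖fderiv ℝ u (t • x)‖₊ : ENNReal) ^ 2)
      ((volume : Measure E).prod (volume.restrict (Ioi (1:ℝ)))) := by
    have m1 : Measurable fun p : E × ℝ => ENNReal.ofReal (p.2 ^ ((3:ℝ)/2)) :=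
      (measurable_snd.pow_const _).ennreal_ofReal
    have m2 : Measurable fun p : E × ℝ => (‖fderiv ℝ u (p.2 • p.1)‖₊ : ENNReal) ^ 2 :=
      ((hvcont.comp (continuous_snd.smul continuous_fst)).measurable.enorm).pow_const 2
    exact (m1.mul m2).aemeasurable
  have hmain : ∫⁻ x : E, ENNReal.ofReal ((‖x‖⁻¹ * ‖u x‖) ^ 2)
      ≤ ENNReal.ofReal 2 * (ENNReal.ofReal 2 * K) := by
    have h0 : ∀ᵐ x : E, x ≠ 0 := by
      rw [ae_iff]
      have : {x : E | ¬ x ≠ 0} = {0} := by ext y; simp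
      rw [this]
      exact measure_singleton 0
    have hae : ∀ᵐ x : E, ENNReal.ofReal ((‖x‖⁻¹ * ‖u x‖) ^ 2) ≤
        ENNReal.ofReal 2 * ∫⁻ t in Ioi (1:ℝ),
          ENNReal.ofReal (t ^ ((3:ℝ)/2)) * (‖fderiv ℝ u (t • x)‖₊ : ENNReal) ^ 2 := by
      filter_upwards [h0] with x hx
      rw [ENNReal.ofReal_pow (by positivity)]
      exact holder_step u hx
    calc ∫⁻ x : E, ENNReal.ofReal ((‖x‖⁻¹ * ‖u x‖) ^ 2)
        ≤ ∫⁻ x : E, ENNReal.ofReal 2 * ∫⁻ t in Ioi (1:ℝ),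
            ENNReal.ofReal (t ^ ((3:ℝ)/2)) * (‖fderiv ℝ u (t • x)‖₊ : ENNReal) ^ 2 :=
          lintegral_mono_ae hae
      _ = ENNReal.ofReal 2 * ∫⁻ x : E, ∫⁻ t in Ioi (1:ℝ),
            ENNReal.ofReal (t ^ ((3:ℝ)/2)) * (‖fderiv ℝ u (t • x)‖₊ : ENNReal) ^ 2 :=
          lintegral_const_mul' _ _ ENNReal.ofReal_ne_top
      _ = ENNReal.ofReal 2 * ∫⁻ t in Ioi (1:ℝ), ∫⁻ x : E,
            ENNReal.ofReal (t ^ ((3:ℝ)/2)) * (‖fderiv ℝ u (t • x)‖₊ : ENNReal) ^ 2 := by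
          rw [lintegral_lintegral_swap hswapm]
      _ = ENNReal.ofReal 2 * (ENNReal.ofReal 2 * K) := by
          congr 1
          have hstep : ∫⁻ t in Ioi (1:ℝ), ∫⁻ x : E,
              ENNReal.ofReal (t ^ ((3:ℝ)/2)) * (‖fderiv ℝ u (t • x)‖₊ : ENNReal) ^ 2
              = ∫⁻ t in Ioi (1:ℝ), ENNReal.ofReal (t ^ (-(3:ℝ)/2)) * K := by
            apply setLIntegral_congr_fun measurableSet_Ioi
            intro t ht
            have ht0 : (0:ℝ) < t := lt_trans zero_lt_one ht
            show ∫⁻ x : E, ENNReal.ofReal (t ^ ((3:ℝ)/2)) * (‖fderiv ℝ u (t • x)‖₊ : ENNReal) ^ 2 = ENNReal.ofReal (t ^ (-(3:ℝ)/2)) * K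
            rw [lintegral_const_mul' _ _ ENNReal.ofReal_ne_top, scaling u ht, ← mul_assoc,
              ← ENNReal.ofReal_mul (Real.rpow_nonneg ht0.le _), ← Real.rpow_add ht0]
            norm_num
            rfl
          rw [hstep]
          simp_rw [lintegral_mul_const' K _ hKfin]
          rw [lintegral_rpow_Ioi_one (by norm_num)]
          norm_num
  -- convert to Bochner integrals
  have lhs_eq : ∫ x : E, (‖x‖⁻¹ * ‖u x‖) ^ 2
      = (∫⁻ x : E, ENNReal.ofReal ((‖x‖⁻¹ * ‖u x‖) ^ 2)).toReal := by
    rw [integral_eq_lintegral_of_nonneg_ae (f := fun x => (‖x‖⁻¹ * ‖u x‖) ^ 2) (Eventually.of_forall fun x => by positivity)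
      ((((measurable_norm.inv).mul u.continuous.norm.measurable).pow_const 2).aestronglyMeasurable)]
  have rhs_eq : ∫ x : E, ‖fderiv ℝ u x‖ ^ 2 = K.toReal := by
    rw [integral_eq_lintegral_of_nonneg_ae (f := fun x => ‖fderiv ℝ u x‖ ^ 2) (Eventually.of_forall fun x => by positivity)
      ((hvcont.norm.pow 2).aestronglyMeasurable)]
    congr 1
    apply lintegral_congr
    intro y
    rw [ENNReal.ofReal_pow (norm_nonneg _), ofReal_norm, enorm_eq_nnnorm]
  rw [lhs_eq, rhs_eq]
  have hne : ENNReal.ofReal 2 * (ENNReal.ofReal 2 * K) ≠ ⊤ :=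
    ENNReal.mul_ne_top ENNReal.ofReal_ne_top (ENNReal.mul_ne_top ENNReal.ofReal_ne_top hKfin)
  have h := ENNReal.toReal_mono hne hmain
  rw [ENNReal.toReal_mul, ENNReal.toReal_mul, ENNReal.toReal_ofReal (by norm_num : (0:ℝ) ≤ 2)] at h
  have : (2:ℝ) ^ 2 * K.toReal = 2 * (2 * K.toReal) := by ring
  linarith
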